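/- Let $M, N \ge 1$ and let $\beta_1, \ldots, \beta_M$ and $\gamma_1, \ldots, \gamma_N$ be nonzero complex numbers, all pairwise distinct within each family, with $\beta_i + \gamma_j \ne 0$ for all $i,j$. Let $C_1,\ldots,C_M$ and $D_1,\ldots,D_N$ be complex numbers with $\sum_{i=1}^M C_i/\beta_i = 1$ and $\sum_{j=1}^N D_j/\gamma_j = 1$. Define $H_k = \frac{C_k}{\beta_k}\sum_{j=1}^N \frac{D_j}{\beta_k+\gamma_j}$ for $1 \le k \le M$ and $Q_k = D_k \sum_{i=1}^M \frac{C_i}{\beta_i(\beta_i+\gamma_k)} - \frac{D_k}{\gamma_k}$ for $1 \le k \le N$. Then for every $\theta \in \mathbb{C}$ distinct from all $\beta_i$ and all $-\gamma_j$: $\sum_{k=1}^{M}\frac{\theta H_k}{\beta_k-\theta} + 1 + \sum_{k=1}^{N}\frac{\theta Q_k}{\theta+\gamma_k} = \sum_{i=1}^{M}\sum_{j=1}^{N}\frac{C_i D_j}{(\beta_i-\theta)(\theta+\gamma_j)}$. -/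
import Mathlib


open Finset

lemma whpf_pointwise (t b c x y : ℂ) (hb : b ≠ 0) (hc : c ≠ 0) (hbc : b + c ≠ 0)
    (h1 : b - t ≠ 0) (h2 : t + c ≠ 0) :
    t * (x / b * (y / (b + c))) / (b - t) + x / b * (y / c) +
      t * (y * (x / (b * (b + c))) - y / c * (x / b)) / (t + c) =
    x * y / ((b - t) * (t + c)) := by
  have e1 : t * (x / b * (y / (b + c))) / (b - t)
      = t * (x * y) / (b * (b + c) * (b - t)) := by
    rw [div_mul_div_comm, mul_div_assoc', div_div]
  have e2 : x / b * (y / c) = x * y / (b * c) := div_mul_div_comm ..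
  have e3 : t * (y * (x / (b * (b + c))) - y / c * (x / b)) / (t + c)
      = t * (y * x * (c * b) - b * (b + c) * (y * x)) / (b * (b + c) * (c * b) * (t + c)) := by
    rw [mul_div_assoc', div_mul_div_comm,
      div_sub_div _ _ (mul_ne_zero hb hbc) (mul_ne_zero hc hb), mul_div_assoc', div_div]
  rw [e1, e2, e3,
    div_add_div _ _ (mul_ne_zero (mul_ne_zero hb hbc) h1) (mul_ne_zero hb hc),
    div_add_div _ _ (mul_ne_zero (mul_ne_zero (mul_ne_zero hb hbc) h1) (mul_ne_zero hb hc))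
      (mul_ne_zero (mul_ne_zero (mul_ne_zero hb hbc) (mul_ne_zero hc hb)) h2),
    div_eq_div_iff (mul_ne_zero (mul_ne_zero (mul_ne_zero (mul_ne_zero hb hbc) h1) (mul_ne_zero hb hc))
      (mul_ne_zero (mul_ne_zero (mul_ne_zero hb hbc) (mul_ne_zero hc hb)) h2))
      (mul_ne_zero h1 h2)]
  ring

theorem wiener_hopf_partial_fraction (M N : ℕ) (hM : 1 ≤ M) (hN : 1 ≤ N)
    (β : Fin M → ℂ) (γ : Fin N → ℂ)
    (hβ0 : ∀ i, β i ≠ 0) (hγ0 : ∀ j, γ j ≠ 0)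
    (hβ : Function.Injective β) (hγ : Function.Injective γ)
    (hβγ : ∀ i j, β i + γ j ≠ 0)
    (C : Fin M → ℂ) (D : Fin N → ℂ)
    (hC : ∑ i, C i / β i = 1) (hD : ∑ j, D j / γ j = 1)
    (H : Fin M → ℂ) (hH : ∀ k, H k = C k / β k * ∑ j, D j / (β k + γ j))
    (Q : Fin N → ℂ)
    (hQ : ∀ k, Q k = D k * (∑ i, C i / (β i * (β i + γ k))) - D k / γ k)
    (θ : ℂ) (hθ1 : ∀ i, θ ≠ β i) (hθ2 : ∀ j, θ ≠ -γ j) :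
    ∑ k, θ * H k / (β k - θ) + 1 + ∑ k, θ * Q k / (θ + γ k) =
      ∑ i, ∑ j, C i * D j / ((β i - θ) * (θ + γ j)) := by
  have h1 : ∀ i, β i - θ ≠ 0 := fun i => sub_ne_zero.mpr (Ne.symm (hθ1 i))
  have h2 : ∀ j, θ + γ j ≠ 0 := fun j h => hθ2 j (eq_neg_of_add_eq_zero_left h)
  have key : ∀ i j,
      θ * (C i / β i * (D j / (β i + γ j))) / (β i - θ) +
        C i / β i * (D j / γ j) +
        θ * (D j * (C i / (β i * (β i + γ j))) - D j / γ j * (C i / β i)) / (θ + γ j) =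
      C i * D j / ((β i - θ) * (θ + γ j)) := fun i j =>
    whpf_pointwise θ (β i) (γ j) (C i) (D j) (hβ0 i) (hγ0 j) (hβγ i j) (h1 i) (h2 j)
  have e1 : ∑ k, θ * H k / (β k - θ) =
      ∑ i, ∑ j, θ * (C i / β i * (D j / (β i + γ j))) / (β i - θ) := by
    refine Finset.sum_congr rfl fun k _ => ?_
    rw [hH k, Finset.mul_sum, Finset.mul_sum, Finset.sum_div]
  have e2 : (1 : ℂ) = ∑ i, ∑ j, C i / β i * (D j / γ j) := by
    rw [← Finset.sum_mul_sum, hC, hD, mul_one]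
  have e3 : ∑ k, θ * Q k / (θ + γ k) =
      ∑ i, ∑ j, θ * (D j * (C i / (β i * (β i + γ j))) - D j / γ j * (C i / β i)) / (θ + γ j) := by
    rw [show (∑ i, ∑ j, θ * (D j * (C i / (β i * (β i + γ j))) - D j / γ j * (C i / β i)) / (θ + γ j))
        = ∑ j, ∑ i, θ * (D j * (C i / (β i * (β i + γ j))) - D j / γ j * (C i / β i)) / (θ + γ j)
      from Finset.sum_comm]
    refine Finset.sum_congr rfl fun j _ => ?_
    have hd : D j / γ j = ∑ i, D j / γ j * (C i / β i) := by
      rw [← Finset.mul_sum, hC, mul_one]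
    rw [hQ j]
    conv_lhs => rw [hd]
    rw [Finset.mul_sum, ← Finset.sum_sub_distrib, Finset.mul_sum, Finset.sum_div]
  rw [e1, e3]
  nth_rewrite 1 [e2]
  rw [← Finset.sum_add_distrib, ← Finset.sum_add_distrib]
  refine Finset.sum_congr rfl fun i _ => ?_
  rw [← Finset.sum_add_distrib, ← Finset.sum_add_distrib]
  exact Finset.sum_congr rfl fun j _ => key i j
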